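/- Let T be a non-degenerate rooted phylogenetic X-tree, σ a total order on X, f the cluster marker map for T and σ, and v, w two distinct interior vertices of T. Then the vertex sets ∪L_{(T,f)}(v) and ∪L_{(T,f)}(w) intersect in at most one element. Moreover, an element x ∈ X lies in ∪L_{(T,f)}(v) ∩ ∪L_{(T,f)}(w) for some distinct interior vertices v, w if and only if x = f(L(u)) for some non-root interior vertex u of T. -/

import Mathlib

open scoped Classical

/-- A rooted `X`-tree on vertex type `V`: a finite rooted tree encoded by a parent
function, whose leaves (the vertices with no children) are bijectively labelled by `X`. -/
structure XTree (X V : Type) where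
  root : V
  parent : V → V
  parent_root : parent root = root
  reaches : ∀ v : V, ∃ n : ℕ, parent^[n] v = root
  leaf : X → V
  leaf_inj : Function.Injective leaf
  leaf_iff : ∀ v : V, (∀ w : V, parent w = v → w = v) ↔ v ∈ Set.range leaf

namespace XTree

variable {X V : Type}

/-- The children of a vertex. -/
def children (T : XTree X V) (v : V) : Set V := {w | T.parent w = v ∧ w ≠ v}

def IsLeaf (T : XTree X V) (v : V) : Prop := v ∈ Set.range T.leaf

def Interior (T : XTree X V) (v : V) : Prop := ¬ T.IsLeaf v

/-- Phylogenetic: root has at least two children, and no non-root vertex has exactly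
one child (no degree-two vertices apart from possibly the root). -/
def IsPhylo (T : XTree X V) : Prop :=
  2 ≤ (T.children T.root).ncard ∧
    ∀ v : V, v ≠ T.root → T.Interior v → 2 ≤ (T.children v).ncard

/-- `T.Desc v w` : `w` is a descendant of `v` (or equal to `v`). -/
def Desc (T : XTree X V) (v w : V) : Prop := ∃ n : ℕ, T.parent^[n] w = v

/-- The set of leaf labels below a vertex. -/
def leafSet (T : XTree X V) (v : V) : Set X := {x | T.Desc v (T.leaf x)}

/-- `v` is the last common ancestor of the set `S` of vertices. -/
def IsLCA (T : XTree X V) (v : V) (S : Set V) : Prop :=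
  (∀ w ∈ S, T.Desc v w) ∧ ∀ u : V, (∀ w ∈ S, T.Desc u w) → T.Desc u v

/-- Not a star tree: some interior vertex other than the root. -/
def NonDegenerate (T : XTree X V) : Prop := ∃ v : V, T.Interior v ∧ v ≠ T.root

end XTree

/-- A cord: a 2-element subset of `X`. -/
def IsCord {X : Type} (c : Set X) : Prop := ∃ a b : X, a ≠ b ∧ c = {a, b}

/-- The graph `Γ(L)` with vertex set `X` and edge set `L`. -/
def cordGraph {X : Type} (L : Set (Set X)) : SimpleGraph X where
  Adj a b := a ≠ b ∧ ({a, b} : Set X) ∈ L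
  symm := by
    constructor
    intro a b h
    exact ⟨Ne.symm h.1, by rw [Set.pair_comm]; exact h.2⟩
  loopless := by constructor; intro a h; exact h.1 rfl

/-- Topological lasso, via the child-edge graph characterization: for every interior
vertex, any two distinct child subtrees are joined by a cord of `L`. -/
def XTree.IsTopoLasso {X V : Type} (T : XTree X V) (L : Set (Set X)) : Prop :=
  ∀ v c₁ c₂ : V, c₁ ∈ T.children v → c₂ ∈ T.children v → c₁ ≠ c₂ →
    ∃ a b : X, a ∈ T.leafSet c₁ ∧ b ∈ T.leafSet c₂ ∧ ({a, b} : Set X) ∈ L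

/-- Set-inclusion minimal topological lasso. -/
def XTree.IsMinTopoLasso {X V : Type} (T : XTree X V) (L : Set (Set X)) : Prop :=
  T.IsTopoLasso L ∧ ∀ L' ⊆ L, T.IsTopoLasso L' → L' = L

/-- A nonempty vertex set inducing a connected subgraph with no cut vertex. -/
def GoodSet {α : Type} (G : SimpleGraph α) (B : Set α) : Prop :=
  B.Nonempty ∧ (G.induce B).Connected ∧
    ∀ v ∈ B, (B \ {v}).Nonempty → (G.induce (B \ {v})).Connected

/-- A block: a maximal connected induced subgraph without a cut vertex. -/
def IsBlock {α : Type} (G : SimpleGraph α) (B : Set α) : Prop :=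
  GoodSet G B ∧ ∀ C : Set α, GoodSet G C → B ⊆ C → B = C

/-- A block graph: every block is a clique. -/
def IsBlockGraph {α : Type} (G : SimpleGraph α) : Prop :=
  ∀ B : Set α, IsBlock G B → G.IsClique B

/-- A cut vertex: deleting it disconnects the graph. -/
def IsCutVtx {α : Type} (G : SimpleGraph α) (v : α) : Prop :=
  ¬ (G.induce {w | w ≠ v}).Connected

/-- Claw-free: no induced `K_{1,3}`. -/
def ClawFree {α : Type} (G : SimpleGraph α) : Prop :=
  ¬ ∃ v a b c : α, a ≠ b ∧ a ≠ c ∧ b ≠ c ∧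
    G.Adj v a ∧ G.Adj v b ∧ G.Adj v c ∧ ¬ G.Adj a b ∧ ¬ G.Adj a c ∧ ¬ G.Adj b c

/-- The child-edge graph `G(L,v)`: vertices are the children of `v` (equivalently
the child edges of `v`), two of them adjacent if a cord of `L` joins their subtrees. -/
def childGraph {X V : Type} (T : XTree X V) (L : Set (Set X)) (v : V) :
    SimpleGraph {c : V // c ∈ T.children v} where
  Adj c₁ c₂ := c₁ ≠ c₂ ∧ ∃ a b : X,
    a ∈ T.leafSet (c₁ : V) ∧ b ∈ T.leafSet (c₂ : V) ∧ ({a, b} : Set X) ∈ L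
  symm := by
    constructor
    rintro c₁ c₂ ⟨h, a, b, ha, hb, hm⟩
    exact ⟨Ne.symm h, b, a, hb, ha, by rw [Set.pair_comm]; exact hm⟩
  loopless := by constructor; rintro c ⟨h, -⟩; exact h rfl

/-- `cl(T)`: the clusters of non-root interior vertices. -/
def clSet {X V : Type} (T : XTree X V) : Set (Set X) :=
  {A | ∃ v : V, v ≠ T.root ∧ T.Interior v ∧ A = T.leafSet v}

/-- A cluster marker map for `T` and the ordering of `X`:
`f A` is the `σ`-least element of `A` not used as marker of a proper subcluster. -/
def IsClusterMarker {X V : Type} [LinearOrder X] (T : XTree X V) (f : Set X → X) : Prop :=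
  ∀ A ∈ clSet T,
    ((∃ B ∈ clSet T, B ⊂ A) →
      IsLeast (A \ {y | ∃ B ∈ clSet T, B ⊂ A ∧ f B = y}) (f A)) ∧
    ((¬ ∃ B ∈ clSet T, B ⊂ A) → IsLeast A (f A))

/-- The marker of a child `c` of an interior vertex: the label of `c` if `c` is a leaf,
and `f (L(c))` if `c` is interior. -/
def markRel {X V : Type} (T : XTree X V) (f : Set X → X) (c : V) (a : X) : Prop :=
  T.leaf a = c ∨ (T.Interior c ∧ a = f (T.leafSet c))

/-- `L_{(T,f)}(v)`: all cords between markers of distinct children of `v`. -/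
def lassoAt {X V : Type} (T : XTree X V) (f : Set X → X) (v : V) : Set (Set X) :=
  {c | ∃ c₁ c₂ : V, c₁ ∈ T.children v ∧ c₂ ∈ T.children v ∧ c₁ ≠ c₂ ∧
    ∃ a b : X, markRel T f c₁ a ∧ markRel T f c₂ b ∧ c = {a, b}}

/-- `L_{(T,f)}`: the union over all interior vertices of `L_{(T,f)}(v)`. -/
def lassoFull {X V : Type} (T : XTree X V) (f : Set X → X) : Set (Set X) :=
  {c | ∃ v : V, T.Interior v ∧ c ∈ lassoAt T f v}

/-- An equidistant proper edge-weighting of `T`, encoded by the height function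
`t v` = distance from `v` to any leaf below it (so all leaves are equidistant
from the root); properness: interior edges have positive weight. -/
def EquidistantProper {X V : Type} (T : XTree X V) (t : V → ℝ) : Prop :=
  (∀ x : X, t (T.leaf x) = 0) ∧ (∀ v : V, t v ≤ t (T.parent v)) ∧
    ∀ v : V, v ≠ T.root → T.Interior v → t v < t (T.parent v)

/-- Equivalence of two `X`-trees: a root-, parent- and labelling-preserving bijection. -/
def TreeEquiv {X V V' : Type} (T : XTree X V) (T' : XTree X V') : Prop :=
  ∃ φ : V ≃ V', φ T.root = T'.root ∧ (∀ v, φ (T.parent v) = T'.parent (φ v)) ∧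
    ∀ x, φ (T.leaf x) = T'.leaf x

/-- `S` is (equivalent to) the restriction `T|_Y`: the clusters of `S` are exactly the
nonempty traces on `Y` of the clusters of `T`. -/
def IsRestriction {X : Type} (Y : Set X) {V W : Type}
    (T : XTree X V) (S : XTree (↥Y) W) : Prop :=
  ∀ A : Set X, A ⊆ Y →
    ((∃ w : W, A = Subtype.val '' S.leafSet w) ↔ (A.Nonempty ∧ ∃ v : V, A = T.leafSet v ∩ Y))

/-- The restriction `L|_Y` of a set of cords of `X` to cords of `Y`. -/
def restrictLasso {X : Type} (Y : Set X) (L : Set (Set X)) : Set (Set ↥Y) :=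
  {c | ∃ a b : ↥Y, a ≠ b ∧ c = {a, b} ∧ ({(a : X), (b : X)} : Set X) ∈ L}

section Aux

namespace XTree

variable {X V : Type}

lemma root_fixed (T : XTree X V) (n : ℕ) : T.parent^[n] T.root = T.root := by
  induction n with
  | zero => rfl
  | succ n ih => rw [Function.iterate_succ_apply', ih, T.parent_root]

lemma cycle_root (T : XTree X V) {v : V} {n : ℕ} (hn : n ≠ 0)
    (h : T.parent^[n] v = v) : v = T.root := by
  obtain ⟨m, hm⟩ := T.reaches v
  have hmul : ∀ k, T.parent^[k * n] v = v := by
    intro k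
    induction k with
    | zero => simp
    | succ k ih => rw [Nat.succ_mul, Function.iterate_add_apply, h, ih]
  have hle : m ≤ (m + 1) * n :=
    le_trans (Nat.le_succ m) (Nat.le_mul_of_pos_right _ (Nat.pos_of_ne_zero hn))
  have h2 : T.parent^[(m + 1) * n - m] (T.parent^[m] v) = v := by
    rw [← Function.iterate_add_apply, Nat.sub_add_cancel hle]
    exact hmul (m + 1)
  rw [hm, root_fixed] at h2
  exact h2.symm

lemma linearity (T : XTree X V) {u v w : V} {n m : ℕ} (hn : T.parent^[n] u = v)
    (hm : T.parent^[m] u = w) (h : n ≤ m) : T.parent^[m - n] v = w := by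
  rw [← hn, ← Function.iterate_add_apply, Nat.sub_add_cancel h, hm]

lemma Desc.trans {T : XTree X V} {u v w : V} (h1 : T.Desc u v) (h2 : T.Desc v w) :
    T.Desc u w := by
  obtain ⟨n, hn⟩ := h1; obtain ⟨m, hm⟩ := h2
  exact ⟨n + m, by rw [Function.iterate_add_apply, hm, hn]⟩

lemma child_ne_root (T : XTree X V) {v c : V} (hc : c ∈ T.children v) : c ≠ T.root := by
  intro h
  subst h
  have := hc.1
  rw [T.parent_root] at this
  exact hc.2 this

lemma parent_ne_self (T : XTree X V) {u : V} (h : u ≠ T.root) : T.parent u ≠ u := by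
  intro heq
  exact h (T.cycle_root one_ne_zero (by simpa using heq))

lemma mem_children_parent (T : XTree X V) {u : V} (h : u ≠ T.root) :
    u ∈ T.children (T.parent u) :=
  ⟨rfl, (T.parent_ne_self h).symm⟩

lemma interior_parent (T : XTree X V) {u : V} (h : u ≠ T.root) :
    T.Interior (T.parent u) := by
  intro hleaf
  have := (T.leaf_iff (T.parent u)).mpr hleaf u rfl
  exact T.parent_ne_self h this.symm

lemma desc_of_child (T : XTree X V) {v c u : V} (hc : c ∈ T.children v)
    (h : T.Desc c u) : T.Desc v u := by
  obtain ⟨n, hn⟩ := h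
  exact ⟨n + 1, by rw [Function.iterate_succ_apply', hn, hc.1]⟩

lemma leafSet_mono {T : XTree X V} {v w : V} (h : T.Desc v w) :
    T.leafSet w ⊆ T.leafSet v := fun _ hx => h.trans hx

lemma eq_of_parent_iterate (T : XTree X V) {v c c' : V} (hc : c ∈ T.children v)
    (hc' : c' ∈ T.children v) {k : ℕ} (h : T.parent^[k] c = c') : c = c' := by
  cases k with
  | zero => exact h
  | succ k =>
    exfalso
    have h1 : T.parent^[k] v = c' := by
      rw [← hc.1, ← Function.iterate_succ_apply]
      exact h
    have h2 : T.parent^[k + 1] v = v := by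
      rw [Function.iterate_succ_apply', h1, hc'.1]
    have hv : v = T.root := T.cycle_root (Nat.succ_ne_zero k) h2
    rw [hv, root_fixed] at h1
    exact hc'.2 (h1.symm.trans hv.symm)

lemma children_disjoint (T : XTree X V) {v c c' : V} (hc : c ∈ T.children v)
    (hc' : c' ∈ T.children v) {x : X} (h1 : x ∈ T.leafSet c) (h2 : x ∈ T.leafSet c') :
    c = c' := by
  obtain ⟨n, hn⟩ := h1; obtain ⟨m, hm⟩ := h2
  rcases le_total n m with h | h
  · exact T.eq_of_parent_iterate hc hc' (T.linearity hn hm h)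
  · exact (T.eq_of_parent_iterate hc' hc (T.linearity hm hn h)).symm

lemma comparable (T : XTree X V) {v w : V} {x : X} (h1 : x ∈ T.leafSet v)
    (h2 : x ∈ T.leafSet w) : T.Desc v w ∨ T.Desc w v := by
  obtain ⟨n, hn⟩ := h1; obtain ⟨m, hm⟩ := h2
  rcases le_total n m with h | h
  · exact Or.inr ⟨m - n, T.linearity hn hm h⟩
  · exact Or.inl ⟨n - m, T.linearity hm hn h⟩

lemma child_of_iterate (T : XTree X V) {v w : V} :
    ∀ n : ℕ, T.parent^[n] w = v → w ≠ v → ∃ c ∈ T.children v, T.Desc c w := by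
  intro n
  induction n with
  | zero => intro h hne; exact absurd h hne
  | succ n ih =>
    intro h hne
    by_cases hcv : T.parent^[n] w = v
    · exact ih hcv hne
    · refine ⟨T.parent^[n] w, ⟨?_, hcv⟩, ⟨n, rfl⟩⟩
      rw [Function.iterate_succ_apply'] at h
      exact h

lemma two_children {T : XTree X V} [Fintype V] (hph : T.IsPhylo) {v : V}
    (hv : T.Interior v) : ∃ c₁ c₂ : V, c₁ ∈ T.children v ∧ c₂ ∈ T.children v ∧ c₁ ≠ c₂ := by
  have h2 : 2 ≤ (T.children v).ncard := by
    by_cases h : v = T.root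
    · exact h ▸ hph.1
    · exact hph.2 v h hv
  obtain ⟨a, b, ha, hb, hab⟩ := (Set.one_lt_ncard_iff (Set.toFinite _)).mp h2
  exact ⟨a, b, ha, hb, hab⟩

end XTree

lemma f_mem {X V : Type} [LinearOrder X] {T : XTree X V} {f : Set X → X}
    (hf : IsClusterMarker T f) {A : Set X} (hA : A ∈ clSet T) : f A ∈ A := by
  obtain ⟨h1, h2⟩ := hf A hA
  by_cases h : ∃ B ∈ clSet T, B ⊂ A
  · exact (h1 h).1.1
  · exact (h2 h).1

lemma marker_mem {X V : Type} [LinearOrder X] {T : XTree X V} {f : Set X → X}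
    (hf : IsClusterMarker T f) {v c : V} {a : X} (hc : c ∈ T.children v)
    (hm : markRel T f c a) : a ∈ T.leafSet c := by
  rcases hm with h | ⟨hi, rfl⟩
  · exact ⟨0, h⟩
  · exact f_mem hf ⟨c, T.child_ne_root hc, hi, rfl⟩

lemma marker_unique {X V : Type} {T : XTree X V} {f : Set X → X} {c : V} {a b : X}
    (h1 : markRel T f c a) (h2 : markRel T f c b) : a = b := by
  rcases h1 with h1 | ⟨hi1, rfl⟩ <;> rcases h2 with h2 | ⟨hi2, rfl⟩
  · exact T.leaf_inj (h1.trans h2.symm)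
  · exact absurd ⟨a, h1⟩ hi2
  · exact absurd ⟨b, h2⟩ hi1
  · rfl

lemma marker_exists {X V : Type} (T : XTree X V) (f : Set X → X) (c : V) :
    ∃ a : X, markRel T f c a := by
  by_cases h : T.IsLeaf c
  · obtain ⟨a, ha⟩ := h
    exact ⟨a, Or.inl ha⟩
  · exact ⟨f (T.leafSet c), Or.inr ⟨h, rfl⟩⟩

lemma mem_vertexSet_iff {X V : Type} [Fintype V] {T : XTree X V} {f : Set X → X}
    (hph : T.IsPhylo) {v : V} (hv : T.Interior v) {x : X} :
    (∃ c ∈ lassoAt T f v, x ∈ c) ↔ ∃ c ∈ T.children v, markRel T f c x := by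
  constructor
  · rintro ⟨cd, ⟨c₁, c₂, h1, h2, hne, a, b, ha, hb, rfl⟩, hx⟩
    rw [Set.mem_insert_iff, Set.mem_singleton_iff] at hx
    rcases hx with rfl | rfl
    · exact ⟨c₁, h1, ha⟩
    · exact ⟨c₂, h2, hb⟩
  · rintro ⟨c, hc, hm⟩
    obtain ⟨c₁, c₂, h1, h2, hne⟩ := XTree.two_children hph hv
    by_cases hcc : c = c₁
    · obtain ⟨b, hb⟩ := marker_exists T f c₂
      exact ⟨{x, b}, ⟨c, c₂, hc, h2, fun h => hne (hcc ▸ h), x, b, hm, hb, rfl⟩,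
        Set.mem_insert _ _⟩
    · obtain ⟨b, hb⟩ := marker_exists T f c₁
      exact ⟨{x, b}, ⟨c, c₁, hc, h1, hcc, x, b, hm, hb, rfl⟩, Set.mem_insert _ _⟩

lemma key_lemma {X V : Type} [LinearOrder X] {T : XTree X V} {f : Set X → X}
    (hf : IsClusterMarker T f) {v w : V} (hvw : T.Desc v w) (hne : w ≠ v) {x y : X}
    (hx1 : ∃ c ∈ T.children v, markRel T f c x) (hx2 : ∃ d ∈ T.children w, markRel T f d x)
    (hy1 : ∃ c ∈ T.children v, markRel T f c y) (hy2 : ∃ d ∈ T.children w, markRel T f d y) :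
    x = y := by
  obtain ⟨m, hm⟩ := hvw
  obtain ⟨c₀, hc₀, hd₀⟩ := T.child_of_iterate m hm hne
  have hsub : T.leafSet w ⊆ T.leafSet c₀ := XTree.leafSet_mono hd₀
  have main : ∀ z : X, (∃ c ∈ T.children v, markRel T f c z) →
      (∃ d ∈ T.children w, markRel T f d z) → markRel T f c₀ z := by
    rintro z ⟨c, hc, hmc⟩ ⟨d, hd, hmd⟩
    have hz1 : z ∈ T.leafSet c := marker_mem hf hc hmc
    have hz2 : z ∈ T.leafSet c₀ :=
      hsub (XTree.leafSet_mono (T.desc_of_child hd ⟨0, rfl⟩) (marker_mem hf hd hmd))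
    have : c = c₀ := T.children_disjoint hc hc₀ hz1 hz2
    exact this ▸ hmc
  exact marker_unique (main x hx1 hx2) (main y hy1 hy2)

end Aux

/-- for distinct interior vertices `v, w`, the vertex sets of
`L_{(T,f)}(v)` and `L_{(T,f)}(w)` meet in at most one element; and `x` lies in two such
vertex sets iff `x = f(L(u))` for some non-root interior vertex `u`. -/
theorem stmt17 {X V : Type} [Fintype X] [Fintype V] [LinearOrder X] (T : XTree X V)
    (hph : T.IsPhylo) (hX : 3 ≤ Fintype.card X) (hnd : T.NonDegenerate)
    (f : Set X → X) (hf : IsClusterMarker T f) :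
    (∀ v w : V, T.Interior v → T.Interior w → v ≠ w →
        ({x | ∃ c ∈ lassoAt T f v, x ∈ c} ∩
          {x | ∃ c ∈ lassoAt T f w, x ∈ c}).Subsingleton) ∧
      ∀ x : X,
        (∃ v w : V, T.Interior v ∧ T.Interior w ∧ v ≠ w ∧
            (∃ c ∈ lassoAt T f v, x ∈ c) ∧ ∃ c ∈ lassoAt T f w, x ∈ c) ↔
          ∃ u : V, u ≠ T.root ∧ T.Interior u ∧ x = f (T.leafSet u) := by
  constructor
  · intro v w hv hw hvw x hx y hy
    have hx1 := (mem_vertexSet_iff hph hv).mp hx.1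
    have hx2 := (mem_vertexSet_iff hph hw).mp hx.2
    have hy1 := (mem_vertexSet_iff hph hv).mp hy.1
    have hy2 := (mem_vertexSet_iff hph hw).mp hy.2
    obtain ⟨c, hc, hmc⟩ := hx1
    obtain ⟨d, hd, hmd⟩ := hx2
    have hxv : x ∈ T.leafSet v :=
      XTree.leafSet_mono (T.desc_of_child hc ⟨0, rfl⟩) (marker_mem hf hc hmc)
    have hxw : x ∈ T.leafSet w :=
      XTree.leafSet_mono (T.desc_of_child hd ⟨0, rfl⟩) (marker_mem hf hd hmd)
    rcases T.comparable hxv hxw with hdesc | hdesc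
    · exact key_lemma hf hdesc (Ne.symm hvw) ⟨c, hc, hmc⟩ ⟨d, hd, hmd⟩ hy1 hy2
    · exact key_lemma hf hdesc hvw ⟨d, hd, hmd⟩ ⟨c, hc, hmc⟩ hy2 hy1
  · intro x
    constructor
    · rintro ⟨v, w, hv, hw, hvw, hxv, hxw⟩
      obtain ⟨c, hc, hmc⟩ := (mem_vertexSet_iff hph hv).mp hxv
      obtain ⟨d, hd, hmd⟩ := (mem_vertexSet_iff hph hw).mp hxw
      rcases hmc with h1 | ⟨hi, he⟩
      · rcases hmd with h2 | ⟨hi, he⟩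
        · exfalso
          apply hvw
          rw [← hc.1, ← hd.1, h1.symm.trans h2]
        · exact ⟨d, T.child_ne_root hd, hi, he⟩
      · exact ⟨c, T.child_ne_root hc, hi, he⟩
    · rintro ⟨u, hur, hui, hx⟩
      have hxu : x ∈ T.leafSet u := hx ▸ f_mem hf ⟨u, hur, hui, rfl⟩
      obtain ⟨n, hn⟩ := hxu
      have hlu : T.leaf x ≠ u := fun h => hui ⟨x, h⟩
      have hn0 : n ≠ 0 := fun h => hlu (by rw [h] at hn; exact hn)
      have hne1 : 1 ≤ n := Nat.one_le_iff_ne_zero.mpr hn0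
      have hlroot : T.leaf x ≠ T.root := by
        intro h
        rw [h, T.root_fixed] at hn
        exact hur hn.symm
      refine ⟨T.parent u, T.parent (T.leaf x), T.interior_parent hur,
        T.interior_parent hlroot, ?_, ?_, ?_⟩
      · intro h
        have h1 : T.parent^[n - 1] (T.parent (T.leaf x)) = u := by
          rw [← Function.iterate_succ_apply, Nat.succ_eq_add_one, Nat.sub_add_cancel hne1]
          exact hn
        rw [← h] at h1
        have h2 : T.parent^[n] u = u := by
          rw [← Nat.sub_add_cancel hne1, Function.iterate_succ_apply]
          exact h1
        exact hur (T.cycle_root hn0 h2)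
      · exact (mem_vertexSet_iff hph (T.interior_parent hur)).mpr
          ⟨u, T.mem_children_parent hur, Or.inr ⟨hui, hx⟩⟩
      · exact (mem_vertexSet_iff hph (T.interior_parent hlroot)).mpr
          ⟨T.leaf x, T.mem_children_parent hlroot, Or.inl rfl⟩
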